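/- Fix an integer r ≥ 1 and let x, y, s be the sequences produced by the signum algorithm for radius r, and let a_n = x_n + y_n be the Manhattan distance of the n-th path point to the origin. Then the reciprocal of the harmonic mean H(π_n) of the π-values π_n(r) = 4r/a_n converges as r → ∞: lim_{r→∞} 1/H(π_n) = lim_{r→∞} (1/(8r²)) · Σ_{n=0}^{2r−1} a_n = π/16 + 1/8, the limit being taken over positive integers r tending to infinity. -/

import Mathlib

/-- The cost function `Δ` of the signum algorithm at the point `(x, y)` for radius `r`:
`Δ = |r - √((x-1)² + y²)| - |r - √(x² + (y+1)²)|`. -/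
noncomputable def sigDelta (r : ℕ) (x y : ℤ) : ℝ :=
  |(r : ℝ) - Real.sqrt (((x : ℝ) - 1) ^ 2 + (y : ℝ) ^ 2)| -
    |(r : ℝ) - Real.sqrt ((x : ℝ) ^ 2 + ((y : ℝ) + 1) ^ 2)|

/-- The step sign of the signum algorithm: `s = -1` if `Δ ≤ 0`, and `s = 1` if `Δ > 0`. -/
noncomputable def sigStep (r : ℕ) (x y : ℤ) : ℤ :=
  if sigDelta r x y ≤ 0 then -1 else 1

/-- The points `(x_n, y_n)` of the digital quarter circle of radius `r` produced by the
signum algorithm: `(x₀, y₀) = (r, 0)`, and `(x_{n+1}, y_{n+1}) = (x_n - 1, y_n)` if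
`s_n = -1`, `(x_{n+1}, y_{n+1}) = (x_n, y_n + 1)` if `s_n = 1`. -/
noncomputable def sigPt (r : ℕ) : ℕ → ℤ × ℤ
  | 0 => ((r : ℤ), 0)
  | n + 1 =>
    if sigStep r (sigPt r n).1 (sigPt r n).2 = -1
    then ((sigPt r n).1 - 1, (sigPt r n).2)
    else ((sigPt r n).1, (sigPt r n).2 + 1)

/-- The step sequence `s_n` of the signum algorithm for radius `r`. -/
noncomputable def sigS (r : ℕ) (n : ℕ) : ℤ :=
  sigStep r (sigPt r n).1 (sigPt r n).2

/-- The recursively constructed area under the digital quarter circle: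
`𝒜₀ = 0`, `𝒜_{n+1} = 𝒜_n + x_n` if `s_n = 1`, and `𝒜_{n+1} = 𝒜_n` if `s_n = -1`. -/
noncomputable def sigArea (r : ℕ) : ℕ → ℤ
  | 0 => 0
  | n + 1 =>
    if sigS r n = 1 then sigArea r n + (sigPt r n).1 else sigArea r n

set_option maxHeartbeats 1000000

section SigAux

open Filter

lemma sigPt_rel (r : ℕ) (n : ℕ) : (sigPt r n).1 - (sigPt r n).2 = (r : ℤ) - n := by
  induction n with
  | zero => simp [sigPt]
  | succ n ih =>
    rw [sigPt]
    split <;> simp only [Prod.fst, Prod.snd] <;> push_cast <;> omega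

lemma sigPt_y_nonneg (r : ℕ) (n : ℕ) : 0 ≤ (sigPt r n).2 := by
  induction n with
  | zero => simp [sigPt]
  | succ n ih => rw [sigPt]; split <;> simp <;> omega

lemma sigPt_x_le (r : ℕ) (n : ℕ) : (sigPt r n).1 ≤ (r : ℤ) := by
  induction n with
  | zero => simp [sigPt]
  | succ n ih => rw [sigPt]; split <;> simp <;> omega

lemma helper1 {ρ u : ℝ} (hρ : 1 ≤ ρ) (h1 : (ρ-1)^2 ≤ u) (h2 : u ≤ (ρ+1)^2) :
    |ρ - Real.sqrt u| ≤ 1 := by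
  have lb : ρ - 1 ≤ Real.sqrt u := by
    have := Real.sqrt_le_sqrt h1
    rwa [Real.sqrt_sq (by linarith)] at this
  have ub : Real.sqrt u ≤ ρ + 1 := by
    have := Real.sqrt_le_sqrt h2
    rwa [Real.sqrt_sq (by linarith)] at this
  rw [abs_le]; constructor <;> linarith

lemma helper2 {ρ u : ℝ} (hρ : 1 ≤ ρ) (hu : 0 ≤ u) (h : |ρ - Real.sqrt u| ≤ 1) :
    (ρ-1)^2 ≤ u ∧ u ≤ (ρ+1)^2 := by
  rw [abs_le] at h
  have hs : Real.sqrt u ^ 2 = u := Real.sq_sqrt hu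
  have hn := Real.sqrt_nonneg u
  constructor
  · nlinarith [h.2]
  · nlinarith [h.1]

lemma sigPt_invariant (r : ℕ) (hr : 2 ≤ r) :
    ∀ n, n < 2*r → 0 ≤ (sigPt r n).1 ∧
      ((r:ℤ)-1)^2 ≤ (sigPt r n).1^2 + (sigPt r n).2^2 ∧
      (sigPt r n).1^2 + (sigPt r n).2^2 ≤ ((r:ℤ)+1)^2 := by
  have hR : (2:ℤ) ≤ (r:ℤ) := by exact_mod_cast hr
  have hρ : (1:ℝ) ≤ (r:ℝ) := by
    have : (2:ℝ) ≤ (r:ℝ) := by exact_mod_cast hr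
    linarith
  intro n
  induction n with
  | zero =>
    intro _
    simp only [sigPt]
    refine ⟨by positivity, by nlinarith, by nlinarith⟩
  | succ n ih =>
    intro hn
    obtain ⟨hx0, hlo, hhi⟩ := ih (by omega)
    set X := (sigPt r n).1 with hXdef
    set Y := (sigPt r n).2 with hYdef
    have hY : 0 ≤ Y := sigPt_y_nonneg r n
    have hXle : X ≤ (r:ℤ) := sigPt_x_le r n
    have hrel : X - Y = (r:ℤ) - n := sigPt_rel r n
    have hX1 : 1 ≤ X := by
      by_contra h
      have hX : X = 0 := by omega
      have h1 : ((r:ℤ)-1)^2 ≤ Y^2 := by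
        rw [hX] at hlo; simpa using hlo
      have h2 : (r:ℤ) - 1 ≤ Y := by nlinarith
      omega
    set uA : ℝ := ((X:ℝ) - 1)^2 + (Y:ℝ)^2 with huA
    set uB : ℝ := (X:ℝ)^2 + ((Y:ℝ) + 1)^2 with huB
    have huAnn : 0 ≤ uA := by positivity
    have huBnn : 0 ≤ uB := by positivity
    have hΔeq : sigDelta r X Y = |(r:ℝ) - Real.sqrt uA| - |(r:ℝ) - Real.sqrt uB| := rfl
    rcases le_or_gt (sigDelta r X Y) 0 with hΔ | hΔ
    · -- x-step
      have hcond : sigStep r X Y = -1 := by unfold sigStep; exact if_pos hΔ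
      have hstep : sigPt r (n+1) = (X - 1, Y) := by
        rw [sigPt, ← hXdef, ← hYdef, if_pos hcond]
      have key : ((r:ℤ)-1)^2 ≤ (X-1)^2 + Y^2 ∧ (X-1)^2 + Y^2 ≤ ((r:ℤ)+1)^2 := by
        by_cases hd : (r:ℤ)^2 ≤ X^2 + Y^2
        · constructor <;> nlinarith
        · push_neg at hd
          have hYle : Y ≤ (r:ℤ) := by nlinarith
          have hplo : ((r:ℤ)-1)^2 ≤ X^2 + (Y+1)^2 := by nlinarith
          have hphi : X^2 + (Y+1)^2 ≤ ((r:ℤ)+1)^2 := by nlinarith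
          have hBbound : |(r:ℝ) - Real.sqrt uB| ≤ 1 := by
            apply helper1 hρ
            · rw [huB]; exact_mod_cast hplo
            · rw [huB]; exact_mod_cast hphi
          have hA : |(r:ℝ) - Real.sqrt uA| ≤ 1 := by
            rw [hΔeq] at hΔ; linarith
          obtain ⟨hA1, hA2⟩ := helper2 hρ huAnn hA
          rw [huA] at hA1 hA2
          constructor
          · exact_mod_cast hA1
          · exact_mod_cast hA2
      rw [hstep]
      exact ⟨by omega, key.1, key.2⟩
    · -- y-step
      have hcond : ¬ (sigStep r X Y = -1) := by
        unfold sigStep; rw [if_neg (not_le.mpr hΔ)]; decide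
      have hstep : sigPt r (n+1) = (X, Y + 1) := by
        rw [sigPt, ← hXdef, ← hYdef, if_neg hcond]
      have key : ((r:ℤ)-1)^2 ≤ X^2 + (Y+1)^2 ∧ X^2 + (Y+1)^2 ≤ ((r:ℤ)+1)^2 := by
        by_cases hd : X^2 + Y^2 ≤ (r:ℤ)^2
        · have hYle : Y ≤ (r:ℤ) := by nlinarith
          constructor <;> nlinarith
        · push_neg at hd
          have hmlo : ((r:ℤ)-1)^2 ≤ (X-1)^2 + Y^2 := by nlinarith
          have hmhi : (X-1)^2 + Y^2 ≤ ((r:ℤ)+1)^2 := by nlinarith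
          have hAbound : |(r:ℝ) - Real.sqrt uA| ≤ 1 := by
            apply helper1 hρ
            · rw [huA]; exact_mod_cast hmlo
            · rw [huA]; exact_mod_cast hmhi
          have hB : |(r:ℝ) - Real.sqrt uB| ≤ 1 := by
            rw [hΔeq] at hΔ
            have := abs_nonneg ((r:ℝ) - Real.sqrt uB)
            linarith
          obtain ⟨hB1, hB2⟩ := helper2 hρ huBnn hB
          rw [huB] at hB1 hB2
          constructor
          · exact_mod_cast hB1
          · exact_mod_cast hB2
      rw [hstep]
      exact ⟨hx0, key.1, key.2⟩

lemma a_bounds (r n : ℕ) (hr : 2 ≤ r) (hn : n < 2*r) :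
    Real.sqrt (2*((r:ℝ)-1)^2 - ((n:ℝ)-(r:ℝ))^2) ≤ (((sigPt r n).1 + (sigPt r n).2 : ℤ) : ℝ) ∧
    (((sigPt r n).1 + (sigPt r n).2 : ℤ) : ℝ) ≤ Real.sqrt (2*((r:ℝ)+1)^2 - ((n:ℝ)-(r:ℝ))^2) := by
  obtain ⟨hx0, hlo, hhi⟩ := sigPt_invariant r hr n hn
  set X := (sigPt r n).1
  set Y := (sigPt r n).2
  have hY : 0 ≤ Y := sigPt_y_nonneg r n
  have hrel : X - Y = (r:ℤ) - n := sigPt_rel r n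
  have hid : (X + Y)^2 = 2*(X^2 + Y^2) - ((r:ℤ) - n)^2 := by
    rw [← hrel]; ring
  have hXYnn : (0:ℝ) ≤ ((X + Y : ℤ) : ℝ) := by
    have : (0:ℤ) ≤ X + Y := by omega
    exact_mod_cast this
  have hsqlo : 2*((r:ℝ)-1)^2 - ((n:ℝ)-(r:ℝ))^2 ≤ ((X + Y : ℤ) : ℝ)^2 := by
    have h1 : 2*((r:ℤ)-1)^2 - ((r:ℤ) - n)^2 ≤ (X + Y)^2 := by rw [hid]; nlinarith
    have h1' : 2*((r:ℝ)-1)^2 - ((r:ℝ) - (n:ℝ))^2 ≤ ((X + Y : ℤ) : ℝ)^2 := by exact_mod_cast h1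
    nlinarith [h1']
  have hsqhi : ((X + Y : ℤ) : ℝ)^2 ≤ 2*((r:ℝ)+1)^2 - ((n:ℝ)-(r:ℝ))^2 := by
    have h1 : (X + Y)^2 ≤ 2*((r:ℤ)+1)^2 - ((r:ℤ) - n)^2 := by rw [hid]; nlinarith
    have h1' : ((X + Y : ℤ) : ℝ)^2 ≤ 2*((r:ℝ)+1)^2 - ((r:ℝ) - (n:ℝ))^2 := by exact_mod_cast h1
    nlinarith [h1']
  constructor
  · have := Real.sqrt_le_sqrt hsqlo
    rwa [Real.sqrt_sq hXYnn] at this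
  · have harg : (0:ℝ) ≤ 2*((r:ℝ)+1)^2 - ((n:ℝ)-(r:ℝ))^2 := le_trans (sq_nonneg _) hsqhi
    exact (Real.le_sqrt hXYnn harg).mpr hsqhi

lemma arc_integral (r c : ℝ) (h0 : 0 < r) (hrc : r < c) :
    ∫ t in (0:ℝ)..(2*r), Real.sqrt (c^2 - (t-r)^2) =
      r * Real.sqrt (c^2 - r^2) + c^2 * Real.arcsin (r/c) := by
  have hc : 0 < c := h0.trans hrc
  set F : ℝ → ℝ := fun t =>
    ((t-r) * Real.sqrt (c^2-(t-r)^2) + c^2 * Real.arcsin ((t-r)/c)) / 2 with hF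
  have key : ∀ x ∈ Set.uIcc (0:ℝ) (2*r), HasDerivAt F (Real.sqrt (c^2-(x-r)^2)) x := by
    intro x hx
    rw [Set.uIcc_of_le (by linarith)] at hx
    obtain ⟨hx0, hx2r⟩ := hx
    have hw : 0 < c^2 - (x-r)^2 := by nlinarith
    have h1 : HasDerivAt (fun t : ℝ => t - r) 1 x := (hasDerivAt_id x).sub_const r
    have h2 : HasDerivAt (fun t : ℝ => c^2 - (t-r)^2) (-(2*(x-r))) x := by
      have h2a := h1.pow 2
      have h2b := (hasDerivAt_const x (c^2)).sub h2a
      exact (by simpa using h2b : HasDerivAt ((fun x => c ^ 2) - (fun t => t - r) ^ 2) (-(2 * (x - r))) x)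
    have h3 : HasDerivAt (fun t : ℝ => Real.sqrt (c^2-(t-r)^2))
        (1/(2*Real.sqrt (c^2-(x-r)^2)) * (-(2*(x-r)))) x :=
      (Real.hasDerivAt_sqrt hw.ne').comp x h2
    have h4 := h1.mul h3
    have h5 : HasDerivAt (fun t : ℝ => (t-r)/c) (1/c) x := by
      simpa using h1.div_const c
    have hne1 : (x-r)/c ≠ -1 := by
      intro h
      have : x - r = -c := by field_simp at h; linarith
      nlinarith
    have hne2 : (x-r)/c ≠ 1 := by
      intro h
      have : x - r = c := by field_simp at h; linarith
      nlinarith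
    have h6 := Real.hasDerivAt_arcsin hne1 hne2
    have h7 := (h6.comp x h5).const_mul (c^2)
    have h8 := (h4.add h7).div_const 2
    have hsw : 0 < Real.sqrt (c^2-(x-r)^2) := Real.sqrt_pos.mpr hw
    have hsq : Real.sqrt (c^2-(x-r)^2) ^ 2 = c^2-(x-r)^2 := Real.sq_sqrt hw.le
    have hkey : Real.sqrt (1 - ((x-r)/c)^2) = Real.sqrt (c^2-(x-r)^2) / c := by
      rw [show (1 : ℝ) - ((x-r)/c)^2 = (c^2-(x-r)^2) / c^2 by field_simp,
        Real.sqrt_div hw.le, Real.sqrt_sq hc.le]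
    convert h8 using 1
    · rfl
    · rfl
    · rfl
    rw [hkey]
    field_simp
    linear_combination hsq
  have hcont : Continuous fun t : ℝ => Real.sqrt (c^2 - (t-r)^2) := by
    apply Continuous.sqrt
    continuity
  rw [intervalIntegral.integral_eq_sub_of_hasDerivAt key (hcont.intervalIntegrable _ _)]
  rw [hF]
  simp only
  rw [show 2*r - r = r by ring, show (0:ℝ) - r = -r by ring]
  rw [show ((-r)/c : ℝ) = -(r/c) by ring, Real.arcsin_neg]
  rw [show ((-r:ℝ))^2 = r^2 by ring]
  ring

lemma shiftsum (g : ℕ → ℝ) (a : ℕ) : ∀ b, a ≤ b →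
    ∑ x ∈ Finset.Ico a b, g (x+1) = ∑ x ∈ Finset.Ico a b, g x - g a + g b := by
  intro b
  induction b with
  | zero => intro h; interval_cases a; simp
  | succ b ihb =>
    intro h
    rcases Nat.lt_or_ge a (b+1) with h' | h'
    · have hab : a ≤ b := by omega
      rw [Finset.sum_Ico_succ_top hab, Finset.sum_Ico_succ_top hab, ihb hab]
      ring
    · have : a = b + 1 := by omega
      subst this; simp

lemma sum_int_bounds (r : ℕ) (c : ℝ) (hr : 1 ≤ r) (hc : (r:ℝ) < c) :
    (∫ t in (0:ℝ)..(2*(r:ℝ)), Real.sqrt (c^2 - (t - (r:ℝ))^2)) - c ≤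
      (∑ n ∈ Finset.range (2*r), Real.sqrt (c^2 - ((n:ℝ) - (r:ℝ))^2)) ∧
    (∑ n ∈ Finset.range (2*r), Real.sqrt (c^2 - ((n:ℝ) - (r:ℝ))^2)) ≤
      (∫ t in (0:ℝ)..(2*(r:ℝ)), Real.sqrt (c^2 - (t - (r:ℝ))^2)) + c := by
  have hc0 : (0:ℝ) < c := lt_of_le_of_lt (by positivity) hc
  set f : ℝ → ℝ := fun t => Real.sqrt (c^2 - (t - (r:ℝ))^2) with hf
  have hcont : Continuous f := by
    apply Continuous.sqrt; continuity
  have hint : ∀ a b : ℝ, IntervalIntegrable f MeasureTheory.volume a b :=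
    fun a b => hcont.intervalIntegrable a b
  have hfnn : ∀ t : ℝ, 0 ≤ f t := fun t => Real.sqrt_nonneg _
  have hfle : ∀ t : ℝ, f t ≤ c := by
    intro t
    have h1 : f t ≤ Real.sqrt (c^2) := Real.sqrt_le_sqrt (by nlinarith [sq_nonneg (t - (r:ℝ))])
    rwa [Real.sqrt_sq hc0.le] at h1
  have hmono : MonotoneOn f (Set.Icc (((0:ℕ)):ℝ) ((r:ℕ):ℝ)) := by
    intro a ha b hb hab
    simp only [Set.mem_Icc, Nat.cast_zero] at ha hb
    exact Real.sqrt_le_sqrt (by nlinarith [ha.1, ha.2, hb.1, hb.2])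
  have hanti : AntitoneOn f (Set.Icc ((r:ℕ):ℝ) ((2*r:ℕ):ℝ)) := by
    intro a ha b hb hab
    simp only [Set.mem_Icc] at ha hb
    exact Real.sqrt_le_sqrt (by nlinarith [ha.1, hb.1])
  have h1 := hmono.sum_le_integral_Ico (Nat.zero_le r)
  have h2 := hmono.integral_le_sum_Ico (Nat.zero_le r)
  have h3 := hanti.integral_le_sum_Ico (by omega : r ≤ 2*r)
  have h4 := hanti.sum_le_integral_Ico (by omega : r ≤ 2*r)
  have hs1 := shiftsum (fun n : ℕ => f n) 0 r (Nat.zero_le r)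
  have hs2 := shiftsum (fun n : ℕ => f n) r (2*r) (by omega)
  simp only [Nat.cast_add, Nat.cast_one] at h2 h4
  push_cast at hs1 hs2
  rw [hs1] at h2
  rw [hs2] at h4
  have hsplit : ∑ n ∈ Finset.range (2*r), f n =
      (∑ n ∈ Finset.Ico 0 r, f n) + ∑ n ∈ Finset.Ico r (2*r), f n := by
    rw [Finset.range_eq_Ico, ← Finset.sum_Ico_consecutive _ (Nat.zero_le r) (by omega : r ≤ 2*r)]
  have hisplit : (∫ t in (0:ℝ)..(2*(r:ℝ)), f t) =
      (∫ t in (((0:ℕ)):ℝ)..((r:ℕ):ℝ), f t) + ∫ t in ((r:ℕ):ℝ)..((2*r:ℕ):ℝ), f t := by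
    rw [intervalIntegral.integral_add_adjacent_intervals (hint _ _) (hint _ _)]
    norm_num
  have e0 : (0:ℝ) ≤ f ((0:ℕ):ℝ) := hfnn _
  have e2r : (0:ℝ) ≤ f ((2*r:ℕ):ℝ) := hfnn _
  have er : f ((r:ℕ):ℝ) ≤ c := hfle _
  push_cast at h1 h2 h3 h4 hisplit e0 e2r er hsplit ⊢
  constructor
  · rw [hsplit, hisplit]
    linarith
  · rw [hsplit, hisplit]
    linarith

lemma tendsto_bound (ε : ℝ) (hε : ε = 1 ∨ ε = -1) :
    Tendsto (fun r : ℕ => (1/(8*(r:ℝ)^2)) *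
      (((r:ℝ) * Real.sqrt ((Real.sqrt 2*((r:ℝ)+ε))^2 - (r:ℝ)^2) +
        (Real.sqrt 2*((r:ℝ)+ε))^2 * Real.arcsin ((r:ℝ)/(Real.sqrt 2*((r:ℝ)+ε)))) +
        ε*(Real.sqrt 2*((r:ℝ)+ε))))
      atTop (nhds (Real.pi/16 + 1/8)) := by
  have hε2 : ε^2 = 1 := by rcases hε with h | h <;> simp [h]
  have hεabs : -1 ≤ ε ∧ ε ≤ 1 := by rcases hε with h | h <;> simp [h]
  have h22 : Real.sqrt 2 ^ 2 = 2 := Real.sq_sqrt (by norm_num)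
  have h2pos : (0:ℝ) < Real.sqrt 2 := Real.sqrt_pos.mpr (by norm_num)
  set g : ℝ → ℝ := fun x => (1/8)*Real.sqrt (2*x^2-1) +
      (1/4)*x^2*Real.arcsin (1/(Real.sqrt 2*x)) with hg
  set G : ℕ → ℝ := fun r => g (1+ε/(r:ℝ)) +
      (ε*Real.sqrt 2*(1+ε/(r:ℝ))) * (1/(8*(r:ℝ))) with hG
  -- eventual equality
  have heq : ∀ᶠ r : ℕ in atTop, (1/(8*(r:ℝ)^2)) *
      (((r:ℝ) * Real.sqrt ((Real.sqrt 2*((r:ℝ)+ε))^2 - (r:ℝ)^2) +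
        (Real.sqrt 2*((r:ℝ)+ε))^2 * Real.arcsin ((r:ℝ)/(Real.sqrt 2*((r:ℝ)+ε)))) +
        ε*(Real.sqrt 2*((r:ℝ)+ε))) = G r := by
    filter_upwards [eventually_ge_atTop 4] with r hr
    set R : ℝ := (r:ℝ) with hRdef
    have hR : (4:ℝ) ≤ R := by rw [hRdef]; exact_mod_cast hr
    have hR0 : (0:ℝ) < R := by linarith
    have hRε : (0:ℝ) < R + ε := by nlinarith [hεabs.1]
    have hc2 : (Real.sqrt 2*(R+ε))^2 = 2*(R+ε)^2 := by rw [mul_pow, h22]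
    have h1e : (3/4:ℝ) ≤ 1 + ε/R := by
      have : -(1/4:ℝ) ≤ ε/R := by
        rw [le_div_iff₀ hR0]
        nlinarith [hεabs.1]
      linarith
    have hfac : (0:ℝ) ≤ 2*(1+ε/R)^2 - 1 := by nlinarith
    have hAeq : 2*(R+ε)^2 - R^2 = (2*(1+ε/R)^2 - 1)*R^2 := by
      field_simp
    have hsq : Real.sqrt ((Real.sqrt 2*(R+ε))^2 - R^2) = Real.sqrt (2*(1+ε/R)^2-1) * R := by
      rw [hc2, hAeq, Real.sqrt_mul hfac, Real.sqrt_sq hR0.le]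
    have harg : R/(Real.sqrt 2*(R+ε)) = 1/(Real.sqrt 2*(1+ε/R)) := by
      rw [div_eq_div_iff (mul_pos h2pos hRε).ne' (mul_pos h2pos (by linarith : (0:ℝ) < 1+ε/R)).ne']
      field_simp
    rw [hsq, harg, hc2, hG, hg]
    simp only
    rw [← hRdef]
    field_simp
    ring
  rw [tendsto_congr' (heq.mono fun r h => h)]
  -- limit of G
  have h1 : Tendsto (fun r : ℕ => 1+ε/(r:ℝ)) atTop (nhds 1) := by
    have h0 : Tendsto (fun r : ℕ => ε/(r:ℝ)) atTop (nhds 0) := by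
      have := tendsto_one_div_atTop_nhds_zero_nat.const_mul ε
      simpa [div_eq_mul_inv] using this
    have := h0.const_add 1
    simpa using this
  have hgc : ContinuousAt g 1 := by
    apply ContinuousAt.add
    · exact (continuousAt_const.mul (((continuousAt_const.mul
        ((continuousAt_id).pow 2)).sub continuousAt_const).sqrt))
    · apply ContinuousAt.mul
      · exact continuousAt_const.mul ((continuousAt_id).pow 2)
      · apply Real.continuous_arcsin.continuousAt.comp
        exact ContinuousAt.div continuousAt_const
          (continuousAt_const.mul continuousAt_id) (by simpa using h2pos.ne')
  have hgval : g 1 = 1/8 + Real.pi/16 := by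
    rw [hg]
    simp only
    rw [show (2:ℝ)*1^2-1 = 1 by ring, Real.sqrt_one]
    have harg : (1:ℝ)/(Real.sqrt 2*1) = Real.sqrt 2/2 := by
      rw [mul_one, div_eq_div_iff h2pos.ne' (by norm_num : (2:ℝ) ≠ 0)]
      nlinarith [h22]
    rw [harg]
    have : Real.arcsin (Real.sqrt 2/2) = Real.pi/4 := by
      rw [← Real.sin_pi_div_four]
      exact Real.arcsin_sin (by nlinarith [Real.pi_pos]) (by nlinarith [Real.pi_pos])
    rw [this]
    ring
  have hT1 : Tendsto (fun r : ℕ => g (1+ε/(r:ℝ))) atTop (nhds (1/8 + Real.pi/16)) := by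
    rw [← hgval]
    exact hgc.tendsto.comp h1
  have hT2 : Tendsto (fun r : ℕ => (ε*Real.sqrt 2*(1+ε/(r:ℝ))) * (1/(8*(r:ℝ))))
      atTop (nhds 0) := by
    have ha : Tendsto (fun r : ℕ => ε*Real.sqrt 2*(1+ε/(r:ℝ))) atTop (nhds (ε*Real.sqrt 2)) := by
      have := h1.const_mul (ε*Real.sqrt 2)
      simpa using this
    have hb : Tendsto (fun r : ℕ => 1/(8*(r:ℝ))) atTop (nhds 0) := by
      have := tendsto_one_div_atTop_nhds_zero_nat.const_mul (1/8 : ℝ)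
      convert this using 2 with r
      · rw [one_div, mul_inv, one_div]; ring
      · simp
    have := ha.mul hb
    simpa using this
  have := hT1.add hT2
  rw [hG]
  convert this using 2
  ring

end SigAux

open Filter

/-- The reciprocal of the harmonic mean of the π-values `π_n(r) = 4r/a_n`, where
`a_n = x_n + y_n` is the Manhattan distance of the `n`-th point of the digital quarter
circle to the origin, converges:
`lim_{r→∞} 1/H(π_n) = lim_{r→∞} (1/(8r²)) Σ_{n=0}^{2r-1} a_n = π/16 + 1/8`. -/
theorem sig_harmonic_mean_reciprocal_tendsto :
    Tendsto
      (fun r : ℕ => (1 / (8 * (r : ℝ) ^ 2)) *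
        ∑ n ∈ Finset.range (2 * r), (((sigPt r n).1 + (sigPt r n).2 : ℤ) : ℝ))
      atTop (nhds (Real.pi / 16 + 1 / 8)) := by
  have h22 : Real.sqrt 2 ^ 2 = 2 := Real.sq_sqrt (by norm_num)
  have h2pos : (0:ℝ) < Real.sqrt 2 := Real.sqrt_pos.mpr (by norm_num)
  have h2lb : (1.4:ℝ) ≤ Real.sqrt 2 := by nlinarith [Real.sqrt_nonneg 2]
  apply tendsto_of_tendsto_of_tendsto_of_le_of_le'
    (tendsto_bound (-1) (Or.inr rfl)) (tendsto_bound 1 (Or.inl rfl))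
  · -- lower bound
    filter_upwards [eventually_ge_atTop 4] with r hr
    have hr1 : 1 ≤ r := by omega
    have hr2 : 2 ≤ r := by omega
    have hR4 : (4:ℝ) ≤ (r:ℝ) := by exact_mod_cast hr
    have hRpos : (0:ℝ) < (r:ℝ) := by linarith
    set c : ℝ := Real.sqrt 2 * ((r:ℝ) + (-1)) with hc
    have hceq : c = Real.sqrt 2 * ((r:ℝ) - 1) := by rw [hc]; ring
    have hrc : (r:ℝ) < c := by rw [hceq]; nlinarith
    have hc2 : c^2 = 2*((r:ℝ)-1)^2 := by rw [hceq, mul_pow, h22]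
    have hib := (sum_int_bounds r c hr1 hrc).1
    have hsum : (∑ n ∈ Finset.range (2*r), Real.sqrt (c^2 - ((n:ℝ)-(r:ℝ))^2)) ≤
        ∑ n ∈ Finset.range (2*r), (((sigPt r n).1 + (sigPt r n).2 : ℤ) : ℝ) := by
      apply Finset.sum_le_sum
      intro n hn
      rw [hc2]
      exact (a_bounds r n hr2 (Finset.mem_range.mp hn)).1
    have hint := arc_integral (r:ℝ) c hRpos hrc
    apply mul_le_mul_of_nonneg_left _ (by positivity)
    linarith
  · -- upper bound
    filter_upwards [eventually_ge_atTop 4] with r hr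
    have hr1 : 1 ≤ r := by omega
    have hr2 : 2 ≤ r := by omega
    have hR4 : (4:ℝ) ≤ (r:ℝ) := by exact_mod_cast hr
    have hRpos : (0:ℝ) < (r:ℝ) := by linarith
    set c : ℝ := Real.sqrt 2 * ((r:ℝ) + 1) with hc
    have hrc : (r:ℝ) < c := by rw [hc]; nlinarith
    have hc2 : c^2 = 2*((r:ℝ)+1)^2 := by rw [hc, mul_pow, h22]
    have hib := (sum_int_bounds r c hr1 hrc).2
    have hsum : (∑ n ∈ Finset.range (2*r), (((sigPt r n).1 + (sigPt r n).2 : ℤ) : ℝ)) ≤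
        ∑ n ∈ Finset.range (2*r), Real.sqrt (c^2 - ((n:ℝ)-(r:ℝ))^2) := by
      apply Finset.sum_le_sum
      intro n hn
      rw [hc2]
      exact (a_bounds r n hr2 (Finset.mem_range.mp hn)).2
    have hint := arc_integral (r:ℝ) c hRpos hrc
    apply mul_le_mul_of_nonneg_left _ (by positivity)
    linarith
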